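/- Let d ≥ 1, let H and P be d×d real matrices such that the spectral radius of PH satisfies ρ(PH) ≤ 1/8, and let δ ∈ (0, 1/2]. Then for every λ ∈ ℂ with λ ≠ 0 such that λ + δ − 1 is an eigenvalue of the d×d complex matrix −((λ−1)/λ²)PH, it holds that |λ| < 1 − δ/2. -/

import Mathlib

open Matrix

noncomputable section

/-- Preconditioned-methods lemma (Section 3.1.3): if the spectral radius of `PH` is at most
`1/8` and `δ ∈ (0, 1/2]`, then any nonzero `λ ∈ ℂ` such that `λ + δ − 1` is an eigenvalue of
`−((λ−1)/λ²)PH` satisfies `|λ| < 1 − δ/2`. -/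
theorem stmt9 (d : ℕ) (hd : 1 ≤ d) (H P : Matrix (Fin d) (Fin d) ℝ)
    (hPH : ∀ μ ∈ spectrum ℂ ((P * H).map (Complex.ofReal ·)), ‖μ‖ ≤ 1 / 8)
    (δ : ℝ) (hδ : δ ∈ Set.Ioc (0 : ℝ) (1 / 2))
    (lam : ℂ) (hlam0 : lam ≠ 0)
    (hlam : lam + (δ : ℂ) - 1 ∈ spectrum ℂ
      ((-((lam - 1) / lam ^ 2)) • (P * H).map (Complex.ofReal ·))) :
    ‖lam‖ < 1 - δ / 2 := by
  obtain ⟨hδ0, hδ2⟩ := hδ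
  haveI : NeZero d := ⟨by omega⟩
  haveI : Nontrivial (Matrix (Fin d) (Fin d) ℂ) := inferInstance
  set c : ℂ := -((lam - 1) / lam ^ 2) with hc
  by_cases hc0 : c = 0
  · -- then lam = 1, and spectrum of 0 is {0}, contradiction with δ > 0
    rw [hc0, zero_smul, spectrum.zero_eq] at hlam
    have h1 : lam = 1 := by
      rw [hc, neg_eq_zero, div_eq_zero_iff] at hc0
      rcases hc0 with h | h
      · exact sub_eq_zero.mp h
      · exact absurd (pow_eq_zero_iff (by norm_num) |>.mp h) hlam0
    rw [h1] at hlam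
    simp only [Set.mem_singleton_iff] at hlam
    have : (δ : ℂ) = 0 := by linear_combination hlam
    exact absurd (by exact_mod_cast this) (ne_of_gt hδ0)
  · -- rescale the spectrum
    rw [show c • (P * H).map (Complex.ofReal ·)
          = (Units.mk0 c hc0) • (P * H).map (Complex.ofReal ·) from rfl,
      spectrum.unit_smul_eq_smul] at hlam
    obtain ⟨μ, hμ, heq⟩ := hlam
    have habs : ‖μ‖ ≤ 1 / 8 := hPH μ hμ
    have heq' : lam + (δ : ℂ) - 1 = c * μ := by
      simpa [Units.smul_def, smul_eq_mul] using heq.symm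
    have habs2 : ‖lam + (δ:ℂ) - 1‖ =
        ‖lam - 1‖ / ‖lam‖ ^ 2 * ‖μ‖ := by
      rw [heq', norm_mul, hc, norm_neg, norm_div, norm_pow]
    set r := ‖lam‖ with hr
    set b := ‖lam + (δ:ℂ) - 1‖ with hb
    set a := ‖lam - 1‖ with ha
    have hr0 : 0 < r := by
      rw [hr]
      exact norm_pos_iff.mpr hlam0
    have hb0 : 0 ≤ b := norm_nonneg _
    have ha0 : 0 ≤ a := norm_nonneg _
    -- key: r^2 * b ≤ a / 8
    have hkey : r ^ 2 * b ≤ a / 8 := by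
      have : b ≤ a / r ^ 2 * (1 / 8) := by
        rw [habs2]
        apply mul_le_mul_of_nonneg_left habs
        positivity
      calc r ^ 2 * b ≤ r ^ 2 * (a / r ^ 2 * (1 / 8)) := by
            apply mul_le_mul_of_nonneg_left this; positivity
        _ = a / 8 := by field_simp
    -- triangle inequalities
    have htri1 : a ≤ b + δ := by
      have := norm_add_le (lam + (δ:ℂ) - 1) (-(δ:ℂ))
      simpa [norm_neg, Complex.norm_real, Real.norm_eq_abs, abs_of_pos hδ0, ← hb, ← ha,
        show lam + (δ:ℂ) - 1 + -(δ:ℂ) = lam - 1 by ring] using this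
    by_contra hcon
    push_neg at hcon
    -- hcon : 1 - δ / 2 ≤ r
    have htri2 : r - (1 - δ) ≤ b := by
      have h1 := norm_add_le (lam + (δ:ℂ) - 1) (1 - (δ:ℂ))
      have h2 : ‖1 - (δ:ℂ)‖ = 1 - δ := by
        rw [show (1 : ℂ) - (δ:ℂ) = ((1 - δ : ℝ) : ℂ) by push_cast; ring,
          Complex.norm_real, Real.norm_eq_abs, abs_of_pos (by linarith)]
      rw [show lam + (δ:ℂ) - 1 + (1 - (δ:ℂ)) = lam by ring, h2, ← hr] at h1
      linarith
    have hbδ : δ / 2 ≤ b := by linarith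
    have hr34 : (3:ℝ)/4 ≤ r := by linarith
    nlinarith [mul_le_mul_of_nonneg_right (mul_le_mul hr34 hr34 (by norm_num) hr0.le) hb0]
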